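/- Let a > 0, λ > 0, W > 2 and y > 0. Then (e^{y/(a√λ)} / (1 + y/(a√λ))^{1 + y/(a√λ)})^λ ≤ e^{-y²/(4a²)} + e^{-|φ(1/2)|·y²/(a²W²)} + e^{-(log(1+W) - 1)·y√λ/a}, where φ(z) = z - (1+z)log(1+z). -/

import Mathlib

open Real


lemma aux_exp_ub {x : ℝ} (h0 : 0 ≤ x) (h1 : x ≤ 1) :
    Real.exp x ≤ 1 + x + x^2/2 + (2/9) * x^3 := by
  have := Real.exp_bound' h0 h1 (n := 3) (by norm_num)
  simp [Finset.sum_range_succ, Nat.factorial] at this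
  nlinarith [this]

lemma aux_exp_neg_ub {t : ℝ} (h0 : 0 ≤ t) (h1 : t ≤ 1) :
    Real.exp (-t) ≤ 1 - t + (3/4) * t^2 := by
  have hb := Real.exp_bound (x := -t) (by rw [abs_of_nonpos (by linarith)]; linarith) (n := 2) (by norm_num)
  simp [Finset.sum_range_succ, Nat.factorial, abs_of_nonpos (show -t ≤ 0 by linarith)] at hb
  have := (abs_le.1 hb).2
  nlinarith [this]

lemma aux_log_lb {z : ℝ} (h0 : 0 < z) (h : z ≤ 1/2) :
    z - z^2/2 ≤ Real.log (1 + z) := by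
  rw [Real.le_log_iff_exp_le (by linarith)]
  have he : Real.exp (z - z^2/2) = Real.exp z * Real.exp (-(z^2/2)) := by
    rw [← Real.exp_add]; ring_nf
  rw [he]
  have h1 : Real.exp z ≤ 1 + z + z^2/2 + (2/9) * z^3 := aux_exp_ub h0.le (by linarith)
  have h2 : Real.exp (-(z^2/2)) ≤ 1 - z^2/2 + (3/4) * (z^2/2)^2 :=
    aux_exp_neg_ub (by positivity) (by nlinarith)
  have hp2 : 0 ≤ Real.exp (-(z^2/2)) := (Real.exp_pos _).le
  calc Real.exp z * Real.exp (-(z^2/2))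
      ≤ (1 + z + z^2/2 + (2/9) * z^3) * (1 - z^2/2 + (3/4) * (z^2/2)^2) := by
        apply mul_le_mul h1 h2 hp2 (by nlinarith)
    _ ≤ 1 + z := by nlinarith [sq_nonneg z, pow_pos h0 3, pow_pos h0 4, pow_pos h0 5]

lemma aux_case1 {z : ℝ} (h0 : 0 < z) (h : z ≤ 1/2) :
    z - (1 + z) * Real.log (1 + z) ≤ -(z^2)/4 := by
  have hl := aux_log_lb h0 h
  nlinarith [hl, sq_nonneg z]

lemma aux_anti : AntitoneOn (fun z : ℝ => z - (1 + z) * Real.log (1 + z)) (Set.Ici 0) := by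
  have hd : ∀ x : ℝ, 0 ≤ x → HasDerivAt (fun z : ℝ => z - (1 + z) * Real.log (1 + z))
      (-Real.log (1 + x)) x := by
    intro x hx
    have hne : (1 : ℝ) + x ≠ 0 := by linarith
    have h1 : HasDerivAt (fun z : ℝ => 1 + z) 1 x := (hasDerivAt_id x).const_add 1
    have h2 : HasDerivAt (fun z : ℝ => Real.log (1 + z)) (1 / (1 + x)) x := by
      simpa using h1.log hne
    have h3 := h1.mul h2
    have h4 := (hasDerivAt_id x).sub h3
    have h5 : HasDerivAt (fun z : ℝ => z - (1 + z) * Real.log (1 + z))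
        (1 - (1 * Real.log (1 + x) + (1 + x) * (1 / (1 + x)))) x := h4
    convert h5 using 1
    rw [mul_one_div_cancel hne]; ring
  apply antitoneOn_of_deriv_nonpos (convex_Ici 0)
  · intro x hx
    exact (hd x hx).continuousAt.continuousWithinAt
  · intro x hx
    rw [interior_Ici] at hx
    exact ((hd x (le_of_lt hx)).differentiableAt).differentiableWithinAt
  · intro x hx
    rw [interior_Ici] at hx
    rw [(hd x (le_of_lt hx)).deriv]
    simp only [neg_nonpos]
    exact Real.log_nonneg (by linarith [hx.out])

/-- For `a > 0`, `λ > 0`, `W > 2`, `y > 0`: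
`(e^{y/(a√λ)} / (1+y/(a√λ))^{1+y/(a√λ)})^λ ≤ e^{-y²/(4a²)} + e^{-|φ(1/2)|y²/(a²W²)}
 + e^{-(log(1+W)-1)y√λ/a}`, where `φ(z) = z - (1+z)log(1+z)`. -/
theorem poisson_tail_split_bound (a lam W y : ℝ)
    (ha : 0 < a) (hlam : 0 < lam) (hW : 2 < W) (hy : 0 < y)
    (φ : ℝ → ℝ) (hφ : φ = fun z => z - (1 + z) * Real.log (1 + z)) :
    (Real.exp (y / (a * Real.sqrt lam)) /
        (1 + y / (a * Real.sqrt lam)) ^ (1 + y / (a * Real.sqrt lam))) ^ lam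
      ≤ Real.exp (-(y ^ 2) / (4 * a ^ 2))
        + Real.exp (-|φ (1 / 2)| * y ^ 2 / (a ^ 2 * W ^ 2))
        + Real.exp (-(Real.log (1 + W) - 1) * y * Real.sqrt lam / a) := by
  have hs : 0 < Real.sqrt lam := Real.sqrt_pos.mpr hlam
  set s := Real.sqrt lam with hsdef
  have hs2 : s ^ 2 = lam := Real.sq_sqrt hlam.le
  set z := y / (a * s) with hzdef
  have hz : 0 < z := div_pos hy (by positivity)
  have h1z : (0:ℝ) < 1 + z := by linarith
  have hyz : y = z * (a * s) := by
    rw [hzdef, div_mul_cancel₀ y (by positivity)]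
  have hL : (Real.exp z / (1 + z) ^ (1 + z)) ^ lam
      = Real.exp (lam * (z - (1 + z) * Real.log (1 + z))) := by
    rw [Real.rpow_def_of_pos h1z, ← Real.exp_sub,
      Real.rpow_def_of_pos (Real.exp_pos _), Real.log_exp]
    ring_nf
  rw [hL]
  have hc : φ (1/2) < 0 := by
    rw [hφ]
    simp only
    have h23 : Real.log (2/3 : ℝ) < 2/3 - 1 :=
      Real.log_lt_sub_one_of_pos (by norm_num) (by norm_num)
    have h32 : Real.log (1 + (1/2:ℝ)) = - Real.log (2/3) := by
      rw [← Real.log_inv]; norm_num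
    rw [h32]
    nlinarith [h23]
  have hy2 : y^2 = z^2 * a^2 * lam := by rw [hyz, ← hs2]; ring
  rcases le_or_gt z (1/2) with hcase1 | hgt
  · -- case z ≤ 1/2
    have h1 := aux_case1 hz hcase1
    have hkey : lam * (z - (1 + z) * Real.log (1 + z)) ≤ -(y^2) / (4 * a^2) := by
      rw [hy2]
      calc lam * (z - (1 + z) * Real.log (1 + z)) ≤ lam * (-(z^2)/4) :=
            mul_le_mul_of_nonneg_left h1 hlam.le
        _ = -(z^2 * a^2 * lam) / (4 * a^2) := by field_simp
    have h2 := Real.exp_le_exp.mpr hkey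
    linarith [h2, Real.exp_pos (-|φ (1/2)| * y^2 / (a^2 * W^2)),
      Real.exp_pos (-(Real.log (1 + W) - 1) * y * s / a)]
  · rcases le_or_gt z W with hcase2 | hgt2
    · -- case 1/2 < z ≤ W
      have hmono : z - (1 + z) * Real.log (1 + z) ≤ φ (1/2) := by
        rw [hφ]
        exact aux_anti (by norm_num : (1/2:ℝ) ∈ Set.Ici 0)
          (le_of_lt (lt_trans (by norm_num) hgt) : z ∈ Set.Ici (0:ℝ)) hgt.le
      have hW0 : (0:ℝ) < W := by linarith
      have hz2 : z^2 ≤ W^2 := by nlinarith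
      have hkey : lam * (z - (1 + z) * Real.log (1 + z))
          ≤ -|φ (1/2)| * y^2 / (a^2 * W^2) := by
        rw [abs_of_neg hc, hy2]
        have step1 : lam * (z - (1 + z) * Real.log (1 + z)) ≤ lam * φ (1/2) :=
          mul_le_mul_of_nonneg_left hmono hlam.le
        have h4 : 0 ≤ (-(φ (1/2))) * (a^2 * lam) * (W^2 - z^2) :=
          mul_nonneg (mul_nonneg (neg_nonneg.mpr hc.le) (by positivity)) (by linarith)
        rw [le_div_iff₀ (by positivity)]
        have step1' := mul_le_mul_of_nonneg_right step1 (by positivity : (0:ℝ) ≤ a^2 * W^2)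
        nlinarith [h4, step1']
      have h2 := Real.exp_le_exp.mpr hkey
      linarith [h2, Real.exp_pos (-(y^2) / (4 * a^2)),
        Real.exp_pos (-(Real.log (1 + W) - 1) * y * s / a)]
    · -- case W < z
      have hlog1 : Real.log (1 + W) ≤ Real.log (1 + z) :=
        Real.log_le_log (by linarith) (by linarith)
      have hlog0 : 0 ≤ Real.log (1 + z) := Real.log_nonneg (by linarith)
      have hys : y * s / a = z * lam := by
        rw [hyz, ← hs2]; field_simp
      have hkey : lam * (z - (1 + z) * Real.log (1 + z))
          ≤ -(Real.log (1 + W) - 1) * y * s / a := by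
        have hr : -(Real.log (1 + W) - 1) * y * s / a
            = lam * (-(Real.log (1 + W) - 1) * z) := by
          rw [mul_assoc, mul_div_assoc, hys]; ring
        rw [hr]
        apply mul_le_mul_of_nonneg_left _ hlam.le
        have h5 : z * Real.log (1 + W) ≤ z * Real.log (1 + z) :=
          mul_le_mul_of_nonneg_left hlog1 hz.le
        nlinarith [h5, mul_nonneg hz.le hlog0, hlog0]
      have h2 := Real.exp_le_exp.mpr hkey
      linarith [h2, Real.exp_pos (-(y^2) / (4 * a^2)),
        Real.exp_pos (-|φ (1/2)| * y^2 / (a^2 * W^2))]
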